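/- For every positive integer n, there is no positive integer x with x^2 − 1 = 2^n·(2^(2n+1) − 1). -/

import Mathlib

theorem no_sol_sq_sub_one (n : ℕ) (hn : 0 < n) :
    ¬ ∃ x : ℤ, 0 < x ∧ x ^ 2 - 1 = 2 ^ n * (2 ^ (2 * n + 1) - 1) := by
  rintro ⟨x, hx, heq⟩
  rcases Nat.even_or_odd n with ⟨k, hk⟩ | ⟨k, hk⟩
  · -- n even: contradiction mod 3
    subst hk
    have hcast := congrArg (Int.cast : ℤ → ZMod 3) heq
    push_cast at hcast
    have h1 : ((2 : ZMod 3)) ^ (k + k) = 1 := by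
      rw [show k + k = 2 * k by ring, pow_mul,
        show ((2:ZMod 3))^2 = 1 from rfl, one_pow]
    have h2 : ((2 : ZMod 3)) ^ (2 * (k + k) + 1) = 2 := by
      rw [pow_succ, show 2 * (k + k) = 4 * k by ring, pow_mul,
        show ((2:ZMod 3))^4 = 1 from rfl, one_pow, one_mul]
    rw [h1, h2] at hcast
    have : ((x : ZMod 3)) ^ 2 = 2 := by linear_combination hcast
    have hall : ∀ y : ZMod 3, y ^ 2 ≠ 2 := by decide
    exact hall _ this
  · -- n odd: x² strictly between consecutive squares
    subst hk
    have hA : ((2:ℤ) ^ (3 * k + 2)) ^ 2 = 2 ^ (6 * k + 4) := by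
      rw [← pow_mul]; ring_nf
    have hrhs : (2:ℤ) ^ (2 * k + 1) * (2 ^ (2 * (2 * k + 1) + 1) - 1)
        = 2 ^ (6 * k + 4) - 2 ^ (2 * k + 1) := by
      rw [mul_sub, mul_one, ← pow_add]
      ring_nf
    rw [hrhs] at heq
    have hp1 : (1:ℤ) < 2 ^ (2 * k + 1) := one_lt_pow₀ (by norm_num) (by omega)
    have hp2 : (2:ℤ) ^ (2 * k + 1) < 2 ^ (3 * k + 3) :=
      pow_lt_pow_right₀ (by norm_num) (by omega)
    have hp3 : (0:ℤ) < 2 ^ (3 * k + 2) := by positivity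
    have hupper : x ^ 2 < ((2:ℤ) ^ (3 * k + 2)) ^ 2 := by
      rw [hA]; omega
    have hlower : ((2:ℤ) ^ (3 * k + 2) - 1) ^ 2 < x ^ 2 := by
      have hexp : (2:ℤ) ^ (3 * k + 3) = 2 * 2 ^ (3 * k + 2) := by
        rw [pow_succ]; ring
      nlinarith [hA]
    have hu : x < (2:ℤ) ^ (3 * k + 2) :=
      lt_of_pow_lt_pow_left₀ 2 (le_of_lt hp3) hupper
    have hl : (2:ℤ) ^ (3 * k + 2) - 1 < x :=
      lt_of_pow_lt_pow_left₀ 2 (le_of_lt hx) hlower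
    omega
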